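/- Let $X=\bigcup_{i=1}^{\infty}(i\mathbb{Z})^i$ with the metric $d(a,b)=\max\{d_{\max}(a',b),c\}$ described below. Then $\mathrm{coasdim}(X)\le fin+1$, i.e., for every $n\in\mathbb{N}$ there exists an $n$-disjoint uniformly bounded family $\mathcal{U}$ of subsets of $X$ such that $X\setminus\bigcup\mathcal{U}$ has finite asymptotic dimension. -/

import Mathlib

noncomputable section
open Metric Set
open scoped ENNReal

/-- A family of subsets is `R`-bounded if every member has diameter at most `R`. -/
def RBounded {X : Type*} [PseudoMetricSpace X] (R : ℝ) (U : Set (Set X)) : Prop :=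
  ∀ A ∈ U, ∀ x ∈ A, ∀ y ∈ A, dist x y ≤ R

/-- A family of subsets is `r`-disjoint if distinct members are at distance at least `r`. -/
def RDisjoint {X : Type*} [PseudoMetricSpace X] (r : ℝ) (U : Set (Set X)) : Prop :=
  ∀ A ∈ U, ∀ B ∈ U, A ≠ B → ∀ x ∈ A, ∀ y ∈ B, r ≤ dist x y

/-- A family of subsets is uniformly bounded if it is `R`-bounded for some `R`. -/
def UniformlyBounded {X : Type*} [PseudoMetricSpace X] (U : Set (Set X)) : Prop :=
  ∃ R : ℝ, RBounded R U

/-- `asdim X ≤ n`: for every `r > 0` there are `n+1` uniformly bounded, `r`-disjoint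
families of subsets of `X` whose union covers `X`. -/
def AsdimLE (X : Type*) [PseudoMetricSpace X] (n : ℕ) : Prop :=
  ∀ r : ℝ, 0 < r → ∃ U : Fin (n + 1) → Set (Set X),
    (∀ i, UniformlyBounded (U i)) ∧ (∀ i, RDisjoint r (U i)) ∧
    (Set.univ : Set X) ⊆ ⋃ i, ⋃₀ U i

/-- `coasdim X ≤ fin + k`: for every `n > 0` there are `k` many `n`-disjoint, `R`-bounded
families whose complement has asymptotic dimension at most some `m`. -/
def CoasdimLE (X : Type*) [PseudoMetricSpace X] (k : ℕ) : Prop :=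
  ∀ n : ℝ, 0 < n → ∃ (R : ℝ) (m : ℕ) (U : Fin k → Set (Set X)),
    (∀ i, RDisjoint n (U i)) ∧ (∀ i, RBounded R (U i)) ∧
    AsdimLE (↥((⋃ i, ⋃₀ U i)ᶜ : Set X)) m

/-- `TT l = l*(l-1)/2 = 1 + 2 + ⋯ + (l-1)`. -/
def TT (l : ℕ) : ℕ := l * (l - 1) / 2

/-- A point of the space `⋃_{i≥1} ((s i)·ℤ)^i × ℤ^k`: a level `l ≥ 1`, coordinates
`coords 0, …, coords (l-1)` divisible by `s l` (zero beyond), and `k` free coordinates. -/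
structure Pt (s : ℕ → ℕ) (k : ℕ) where
  level : ℕ
  coords : ℕ → ℤ
  extra : Fin k → ℤ
  level_pos : 1 ≤ level
  coords_eq_zero : ∀ i, level ≤ i → coords i = 0
  coords_dvd : ∀ i, i < level → (s level : ℤ) ∣ coords i

lemma Pt.memlp {s : ℕ → ℕ} {k : ℕ} (p : Pt s k) :
    Memℓp (fun i => (p.coords i : ℝ)) ∞ := by
  apply memℓp_infty
  refine ⟨(((Finset.range p.level).sup fun i => (p.coords i).natAbs : ℕ) : ℝ), ?_⟩
  rintro r ⟨i, rfl⟩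
  simp only [Real.norm_eq_abs, ← Int.cast_abs]
  by_cases hi : i < p.level
  · have h2 : |p.coords i| ≤ ((Finset.range p.level).sup fun i => (p.coords i).natAbs : ℕ) := by
      rw [Int.abs_eq_natAbs]
      exact_mod_cast Finset.le_sup (f := fun i => (p.coords i).natAbs) (Finset.mem_range.2 hi)
    exact_mod_cast h2
  · have h0 : p.coords i = 0 := p.coords_eq_zero i (not_lt.mp hi)
    simp [h0]

/-- The isometric embedding defining the metric of the paper:
`d(a,b) = max (d_max a' b) c` with `c = |TT l₁ - TT l₂|`. -/
def Pt.F {s : ℕ → ℕ} {k : ℕ} (p : Pt s k) :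
    (lp (fun _ : ℕ => ℝ) ∞) × (Fin k → ℝ) × ℝ :=
  (⟨fun i => (p.coords i : ℝ), p.memlp⟩, fun j => (p.extra j : ℝ), (TT p.level : ℝ))

instance (s : ℕ → ℕ) (k : ℕ) : PseudoMetricSpace (Pt s k) :=
  PseudoMetricSpace.induced Pt.F inferInstance


lemma TT_succ (l : ℕ) : TT (l + 1) = TT l + l := by
  cases l with
  | zero => rfl
  | succ m =>
    show (m+2)*(m+1)/2 = (m+1)*m/2 + (m+1)
    have h : (m+2)*(m+1) = (m+1)*m + (m+1)*2 := by ring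
    rw [h, Nat.add_mul_div_right _ _ (by norm_num : 0 < 2)]

lemma TT_mono : Monotone TT := monotone_nat_of_le_succ fun l => by rw [TT_succ]; omega

lemma TT_add_le {a b : ℕ} (h : a < b) : TT a + a ≤ TT b := by
  calc TT a + a = TT (a+1) := (TT_succ a).symm
  _ ≤ TT b := TT_mono h

variable {s : ℕ → ℕ} {k : ℕ}

lemma Pt.dist_def (p q : Pt s k) :
    dist p q = max ‖(p.F.1 - q.F.1 : lp (fun _ : ℕ => ℝ) ∞)‖
      (max (dist p.F.2.1 q.F.2.1) |(TT p.level : ℝ) - TT q.level|) := by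
  show dist p.F q.F = _
  rw [Prod.dist_eq, Prod.dist_eq, dist_eq_norm, Real.dist_eq]
  rfl

lemma Pt.sub_apply (p q : Pt s k) (i : ℕ) :
    (p.F.1 - q.F.1 : lp (fun _ : ℕ => ℝ) ∞) i = (p.coords i : ℝ) - q.coords i := by
  simp [Pt.F]
  rfl

lemma Pt.coord_le_dist (p q : Pt s k) (i : ℕ) :
    |(p.coords i : ℝ) - q.coords i| ≤ dist p q := by
  rw [Pt.dist_def]
  refine le_max_of_le_left ?_
  have := lp.norm_apply_le_norm (E := fun _ : ℕ => ℝ) ENNReal.top_ne_zero (p.F.1 - q.F.1) i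
  rwa [Pt.sub_apply, Real.norm_eq_abs] at this

lemma Pt.tt_le_dist (p q : Pt s k) :
    |(TT p.level : ℝ) - TT q.level| ≤ dist p q := by
  rw [Pt.dist_def]
  exact le_max_of_le_right (le_max_right _ _)

lemma Pt.dist_le {p q : Pt s k} {C : ℝ} (hC : 0 ≤ C)
    (h1 : ∀ i, |(p.coords i : ℝ) - q.coords i| ≤ C)
    (h2 : ∀ j, |(p.extra j : ℝ) - q.extra j| ≤ C)
    (h3 : |(TT p.level : ℝ) - TT q.level| ≤ C) :
    dist p q ≤ C := by
  rw [Pt.dist_def]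
  refine max_le ?_ (max_le ?_ h3)
  · refine lp.norm_le_of_forall_le hC fun i => ?_
    rw [Pt.sub_apply, Real.norm_eq_abs]; exact h1 i
  · refine (dist_pi_le_iff hC).2 fun j => ?_
    rw [Real.dist_eq]; exact h2 j

lemma Pt.ext' {x y : Pt s k} (h1 : x.level = y.level) (h2 : x.coords = y.coords)
    (h3 : x.extra = y.extra) : x = y := by
  cases x; cases y; simp_all

/-- The set of points of level `< N` has finite asymptotic dimension. -/
lemma asdim_low_levels (N : ℕ) (hN : 1 ≤ N) (S : Set (Pt (fun i => i) 0))
    (hS : ∀ x ∈ S, x.level < N) :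
    AsdimLE ↥S (Fintype.card ((Fin N → Bool) × Fin N) - 1) := by
  intro r hr
  have hNe : Nonempty (Fin N) := ⟨⟨0, hN⟩⟩
  have hpos : 0 < Fintype.card ((Fin N → Bool) × Fin N) := Fintype.card_pos
  have hcard : Fintype.card ((Fin N → Bool) × Fin N) - 1 + 1
      = Fintype.card ((Fin N → Bool) × Fin N) := Nat.succ_pred_eq_of_pos hpos
  set L : ℤ := (⌈r⌉₊ : ℤ) with hLdef
  have hL1 : 1 ≤ L := by
    have h := Nat.one_le_ceil_iff.2 hr
    rw [hLdef]; exact_mod_cast h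
  have hLr : r ≤ (L : ℝ) := by
    rw [hLdef]; push_cast; exact Nat.le_ceil r
  let e : ((Fin N → Bool) × Fin N) ≃ Fin (Fintype.card ((Fin N → Bool) × Fin N) - 1 + 1) :=
    (Fintype.equivFin _).trans (finCongr hcard.symm)
  let Box : Fin N → (Fin N → ℤ) → Set ↥S := fun l b =>
    {x | x.1.level = l.1 ∧ ∀ j : Fin N, b j * L ≤ x.1.coords j.1 ∧ x.1.coords j.1 < b j * L + L}
  let G : (Fin N → Bool) × Fin N → Set (Set ↥S) := fun εl =>
    {A | ∃ b : Fin N → ℤ, (∀ j, b j % 2 = if εl.1 j then 1 else 0) ∧ A = Box εl.2 b}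
  refine ⟨fun i => G (e.symm i), fun i => ⟨(L : ℝ), ?_⟩, fun i => ?_, fun x _ => ?_⟩
  · -- bounded
    rintro A ⟨b, -, rfl⟩ x hx y hy
    rw [Subtype.dist_eq]
    have hC : (0:ℝ) ≤ (L:ℝ) := by exact_mod_cast (by omega : (0:ℤ) ≤ L)
    refine Pt.dist_le hC (fun c => ?_) (fun j => j.elim0) ?_
    · by_cases hi : c < N
      · have h1 := hx.2 ⟨c, hi⟩
        have h2 := hy.2 ⟨c, hi⟩
        have : |x.1.coords c - y.1.coords c| ≤ L := by
          rw [abs_le]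
          constructor <;> linarith [h1.1, h1.2, h2.1, h2.2]
        calc |(x.1.coords c : ℝ) - y.1.coords c| = ((|x.1.coords c - y.1.coords c| : ℤ) : ℝ) := by
              push_cast; ring_nf
          _ ≤ (L : ℝ) := by exact_mod_cast this
      · have hlevx : x.1.level < N := by rw [hx.1]; exact (e.symm i).2.2
        have hlevy : y.1.level < N := by rw [hy.1]; exact (e.symm i).2.2
        have hx0 : x.1.coords c = 0 := x.1.coords_eq_zero c (by omega)
        have hy0 : y.1.coords c = 0 := y.1.coords_eq_zero c (by omega)
        simpa [hx0, hy0] using hC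
    · have : x.1.level = y.1.level := hx.1.trans hy.1.symm
      rw [this]
      simpa using hC
  · -- disjoint
    rintro A ⟨b, hb, rfl⟩ B ⟨b', hb', rfl⟩ hAB x hx y hy
    have hbb : b ≠ b' := by rintro rfl; exact hAB rfl
    obtain ⟨j, hj⟩ := Function.ne_iff.1 hbb
    have hpar : b j % 2 = b' j % 2 := by rw [hb j, hb' j]
    have hx1 := (hx.2 j).1; have hx2 := (hx.2 j).2
    have hy1 := (hy.2 j).1; have hy2 := (hy.2 j).2
    have hsep : (L : ℤ) ≤ |x.1.coords j.1 - y.1.coords j.1| := by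
      rcases lt_or_gt_of_ne hj with h | h
      · have h2 : b j + 2 ≤ b' j := by omega
        have h3 : (b j + 2) * L ≤ b' j * L := mul_le_mul_of_nonneg_right h2 (by omega)
        have h4 : (b j + 2) * L = b j * L + 2 * L := by ring
        rw [abs_sub_comm]
        have h5 : (L:ℤ) ≤ y.1.coords j.1 - x.1.coords j.1 := by linarith
        exact h5.trans (le_abs_self _)
      · have h2 : b' j + 2 ≤ b j := by omega
        have h3 : (b' j + 2) * L ≤ b j * L := mul_le_mul_of_nonneg_right h2 (by omega)
        have h4 : (b' j + 2) * L = b' j * L + 2 * L := by ring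
        have h5 : (L:ℤ) ≤ x.1.coords j.1 - y.1.coords j.1 := by linarith
        exact h5.trans (le_abs_self _)
    have hsepR : (L : ℝ) ≤ |(x.1.coords j.1 : ℝ) - y.1.coords j.1| := by
      have : ((|x.1.coords j.1 - y.1.coords j.1| : ℤ) : ℝ) = |(x.1.coords j.1 : ℝ) - y.1.coords j.1| := by
        push_cast; ring_nf
      rw [← this]
      exact_mod_cast hsep
    rw [Subtype.dist_eq]
    exact hLr.trans (hsepR.trans (Pt.coord_le_dist x.1 y.1 j.1))
  · -- cover
    have hlvl : x.1.level < N := hS x.1 x.2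
    let lF : Fin N := ⟨x.1.level, hlvl⟩
    let b : Fin N → ℤ := fun j => x.1.coords j.1 / L
    let ε : Fin N → Bool := fun j => decide (b j % 2 = 1)
    refine mem_iUnion.2 ⟨e (ε, lF), ?_⟩
    refine ⟨Box lF b, ?_, ?_⟩
    · show Box lF b ∈ G (e.symm (e (ε, lF)))
      rw [Equiv.symm_apply_apply]
      refine ⟨b, fun j => ?_, rfl⟩
      show b j % 2 = if ε j then 1 else 0
      rcases Int.emod_two_eq (b j) with h | h <;> simp [ε, h]
    · refine ⟨rfl, fun j => ?_⟩
      have hL0 : L ≠ 0 := by omega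
      have h1 := Int.mul_ediv_add_emod (x.1.coords j.1) L
      have h2 := Int.emod_nonneg (x.1.coords j.1) hL0
      have h3 := Int.emod_lt_of_pos (x.1.coords j.1) (by omega : 0 < L)
      have hcomm : b j * L = L * (x.1.coords j.1 / L) := mul_comm _ _
      refine ⟨?_, ?_⟩
      · show b j * L ≤ x.1.coords j.1
        rw [hcomm]; linarith
      · show x.1.coords j.1 < b j * L + L
        rw [hcomm]; linarith

/-- Example 3.1: the space `X = ⋃_{i≥1} (iℤ)^i` satisfies `coasdim X ≤ fin + 1`. -/
theorem coasdim_union_iZ_le_fin_add_one : CoasdimLE (Pt (fun i => i) 0) 1 := by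
  intro n hn
  set N : ℕ := ⌈n⌉₊ + 1 with hNdef
  have hnN : n ≤ (N : ℝ) := by
    have := Nat.le_ceil n
    rw [hNdef]; push_cast; linarith
  refine ⟨0, Fintype.card ((Fin N → Bool) × Fin N) - 1,
    fun _ => {A | ∃ x : Pt (fun i => i) 0, N ≤ x.level ∧ A = {x}}, fun i => ?_, fun i => ?_, ?_⟩
  · -- RDisjoint n
    rintro A ⟨x, hx, rfl⟩ B ⟨y, hy, rfl⟩ hAB a ha b hb
    rw [mem_singleton_iff] at ha hb
    rw [ha, hb]
    have hxy : x ≠ y := fun h => hAB (by rw [h])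
    by_cases hlev : x.level = y.level
    · -- same level: some coordinate differs by a multiple of the level
      have hco : x.coords ≠ y.coords := by
        intro h
        exact hxy (Pt.ext' hlev h (funext fun j => j.elim0))
      obtain ⟨c, hc⟩ := Function.ne_iff.1 hco
      have hcN : c < x.level := by
        by_contra h
        push_neg at h
        rw [x.coords_eq_zero c h, y.coords_eq_zero c (hlev ▸ h)] at hc
        exact hc rfl
      have hdx : (x.level : ℤ) ∣ x.coords c := x.coords_dvd c hcN
      have hdy : (x.level : ℤ) ∣ y.coords c := by
        have := y.coords_dvd c (hlev ▸ hcN)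
        rwa [← hlev] at this
      have hdvd : (x.level : ℤ) ∣ x.coords c - y.coords c := dvd_sub hdx hdy
      have hne0 : x.coords c - y.coords c ≠ 0 := sub_ne_zero.2 hc
      have hkey : (x.level : ℤ) ≤ |x.coords c - y.coords c| :=
        Int.le_of_dvd (abs_pos.2 hne0) ((dvd_abs _ _).2 hdvd)
      have hkeyR : ((x.level : ℝ)) ≤ |(x.coords c : ℝ) - y.coords c| := by
        have h2 : ((|x.coords c - y.coords c| : ℤ) : ℝ) = |(x.coords c : ℝ) - y.coords c| := by
          push_cast; ring_nf
        rw [← h2]; exact_mod_cast hkey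
      have hNx : (N : ℝ) ≤ (x.level : ℝ) := by exact_mod_cast hx
      exact le_trans (le_trans hnN (le_trans hNx hkeyR)) (Pt.coord_le_dist x y c)
    · -- different levels: the TT coordinate separates them
      have hkey : (N : ℤ) ≤ |(TT x.level : ℤ) - TT y.level| := by
        rcases Nat.lt_or_ge x.level y.level with h | h
        · have h1 := TT_add_le h
          have h2 : (N : ℤ) ≤ (TT y.level : ℤ) - TT x.level := by push_cast; omega
          rw [abs_sub_comm]
          exact h2.trans (le_abs_self _)
        · have hlt : y.level < x.level := lt_of_le_of_ne h fun h' => hlev h'.symm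
          have h1 := TT_add_le hlt
          have h2 : (N : ℤ) ≤ (TT x.level : ℤ) - TT y.level := by push_cast; omega
          exact h2.trans (le_abs_self _)
      have hkeyR : (N : ℝ) ≤ |(TT x.level : ℝ) - TT y.level| := by
        have h2 : ((|(TT x.level : ℤ) - TT y.level| : ℤ) : ℝ) = |(TT x.level : ℝ) - TT y.level| := by
          push_cast; ring_nf
        rw [← h2]; exact_mod_cast hkey
      exact le_trans (le_trans hnN hkeyR) (Pt.tt_le_dist x y)
  · -- RBounded 0 (singletons)
    rintro A ⟨x, hx, rfl⟩ a ha b hb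
    rw [mem_singleton_iff] at ha hb
    rw [ha, hb]
    simp
  · -- complement has finite asdim
    apply asdim_low_levels N (by omega) _
    intro x hx
    by_contra h
    push_neg at h
    exact hx (mem_iUnion.2 ⟨0, {x}, ⟨x, h, rfl⟩, mem_singleton x⟩)
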